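/- In the two-block SBP setting, if additionally R⁺ and R⁻ are positive semidefinite, then for all u, v ∈ ℝ^N one has uᵀ H̄ D v = −c² Σ_{σ∈{+,−}} [ (D_x^σ (Pu)^σ)ᵀ H^σ (D_x^σ (Pv)^σ) + (D_y^σ (Pu)^σ)ᵀ H^σ (D_y^σ (Pv)^σ) + ((Pu)^σ)ᵀ R^σ (Pv)^σ ]; in particular (u, D u)_{H̄} ≤ 0 for every u ∈ ℝ^N, i.e. −D is positive semidefinite with respect to H̄. -/

import Mathlib

open Matrix

private lemma blockDot {a b : Type*} [Fintype a] [Fintype b] (A : Matrix a a ℝ) (B : Matrix a b ℝ)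
    (C : Matrix b a ℝ) (Dm : Matrix b b ℝ) (x y : a ⊕ b → ℝ) :
    x ⬝ᵥ (fromBlocks A B C Dm) *ᵥ y =
      (x ∘ Sum.inl) ⬝ᵥ A *ᵥ (y ∘ Sum.inl) + (x ∘ Sum.inl) ⬝ᵥ B *ᵥ (y ∘ Sum.inr)
      + (x ∘ Sum.inr) ⬝ᵥ C *ᵥ (y ∘ Sum.inl) + (x ∘ Sum.inr) ⬝ᵥ Dm *ᵥ (y ∘ Sum.inr) := by
  rw [fromBlocks_mulVec]
  conv_lhs => rw [← Sum.elim_comp_inl_inr x]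
  rw [sumElim_dotProduct_sumElim, dotProduct_add, dotProduct_add]
  ring

private lemma bdryDot {m n n' : Type*} [Fintype m] [Fintype n] [Fintype n']
    (e : Matrix m n ℝ) (d : Matrix m n' ℝ) (W : Matrix m m ℝ)
    (x : n → ℝ) (y : n' → ℝ) : x ⬝ᵥ (eᵀ * W * d) *ᵥ y = (e *ᵥ x) ⬝ᵥ W *ᵥ (d *ᵥ y) := by
  rw [← Matrix.mulVec_mulVec, ← Matrix.mulVec_mulVec, dotProduct_mulVec, vecMul_transpose]


set_option maxHeartbeats 1000000 in
/-- In the two-block SBP setting, with R⁺ and R⁻ positive semidefinite, the quadratic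
form of D with respect to H̄ is a negative sum of squares; in particular −D is positive
semidefinite with respect to H̄. -/
theorem twoBlock_D_negSemidef
    {Np Nm : ℕ} (hNp : 0 < Np) (hNm : 0 < Nm)
    {mwp mep msp mnp mwm mem msm : ℕ}
    (hmwp : 0 < mwp) (hmep : 0 < mep) (hmsp : 0 < msp) (hmnp : 0 < mnp)
    (hmwm : 0 < mwm) (hmem : 0 < mem) (hmsm : 0 < msm)
    (Hp DLp Dxp Dyp Rp : Matrix (Fin Np) (Fin Np) ℝ)
    (Hm DLm Dxm Dym Rm : Matrix (Fin Nm) (Fin Nm) ℝ)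
    (hHp : Hp.PosDef) (hHm : Hm.PosDef) (hRp : Rp.IsSymm) (hRm : Rm.IsSymm)
    (ewp dwp : Matrix (Fin mwp) (Fin Np) ℝ) (Hwp : Matrix (Fin mwp) (Fin mwp) ℝ)
    (eep dep : Matrix (Fin mep) (Fin Np) ℝ) (Hep : Matrix (Fin mep) (Fin mep) ℝ)
    (esp dsp : Matrix (Fin msp) (Fin Np) ℝ) (Hsp : Matrix (Fin msp) (Fin msp) ℝ)
    (enp dnp : Matrix (Fin mnp) (Fin Np) ℝ) (Hnp : Matrix (Fin mnp) (Fin mnp) ℝ)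
    (ewm dwm : Matrix (Fin mwm) (Fin Nm) ℝ) (Hwm : Matrix (Fin mwm) (Fin mwm) ℝ)
    (eem dem : Matrix (Fin mem) (Fin Nm) ℝ) (Hem : Matrix (Fin mem) (Fin mem) ℝ)
    (esm dsm : Matrix (Fin msm) (Fin Nm) ℝ) (Hsm : Matrix (Fin msm) (Fin msm) ℝ)
    -- interface matching: m_n⁻ = m_s⁺ (same row dimension) and H_n⁻ = H_s⁺
    (enm dnm : Matrix (Fin msp) (Fin Nm) ℝ) (Hnm : Matrix (Fin msp) (Fin msp) ℝ)
    (hHwp : Hwp.IsSymm) (hHep : Hep.IsSymm) (hHsp : Hsp.IsSymm) (hHnp : Hnp.IsSymm)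
    (hHwm : Hwm.IsSymm) (hHem : Hem.IsSymm) (hHsm : Hsm.IsSymm) (hHnm : Hnm.IsSymm)
    (hmatch : Hsp = Hnm)
    (hSBPp : ∀ u v : Fin Np → ℝ,
      u ⬝ᵥ (Hp * DLp) *ᵥ v =
        -((Dxp *ᵥ u) ⬝ᵥ Hp *ᵥ (Dxp *ᵥ v)) - ((Dyp *ᵥ u) ⬝ᵥ Hp *ᵥ (Dyp *ᵥ v))
        - u ⬝ᵥ Rp *ᵥ v
        + (ewp *ᵥ u) ⬝ᵥ Hwp *ᵥ (dwp *ᵥ v) + (eep *ᵥ u) ⬝ᵥ Hep *ᵥ (dep *ᵥ v)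
        + (esp *ᵥ u) ⬝ᵥ Hsp *ᵥ (dsp *ᵥ v) + (enp *ᵥ u) ⬝ᵥ Hnp *ᵥ (dnp *ᵥ v))
    (hSBPm : ∀ u v : Fin Nm → ℝ,
      u ⬝ᵥ (Hm * DLm) *ᵥ v =
        -((Dxm *ᵥ u) ⬝ᵥ Hm *ᵥ (Dxm *ᵥ v)) - ((Dym *ᵥ u) ⬝ᵥ Hm *ᵥ (Dym *ᵥ v))
        - u ⬝ᵥ Rm *ᵥ v
        + (ewm *ᵥ u) ⬝ᵥ Hwm *ᵥ (dwm *ᵥ v) + (eem *ᵥ u) ⬝ᵥ Hem *ᵥ (dem *ᵥ v)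
        + (esm *ᵥ u) ⬝ᵥ Hsm *ᵥ (dsm *ᵥ v) + (enm *ᵥ u) ⬝ᵥ Hnm *ᵥ (dnm *ᵥ v))
    (c : ℝ)
    (Hbar : Matrix (Fin Np ⊕ Fin Nm) (Fin Np ⊕ Fin Nm) ℝ)
    (hHbar : Hbar = fromBlocks Hp 0 0 Hm)
    (L : Matrix (Fin mnp ⊕ Fin msp) (Fin Np ⊕ Fin Nm) ℝ)
    (hL : L = fromBlocks enp 0 esp (-enm))
    (hLHL : IsUnit (L * Hbar⁻¹ * Lᵀ))
    (P : Matrix (Fin Np ⊕ Fin Nm) (Fin Np ⊕ Fin Nm) ℝ)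
    (hP : P = 1 - Hbar⁻¹ * Lᵀ * (L * Hbar⁻¹ * Lᵀ)⁻¹ * L)
    (SATBC1 SATBC2 SATIC : Matrix (Fin Np ⊕ Fin Nm) (Fin Np ⊕ Fin Nm) ℝ)
    (hSATBC1 : SATBC1 = -(Hbar⁻¹ *
      (fromBlocks (ewpᵀ * Hwp * dwp) 0 0 (ewmᵀ * Hwm * dwm)
        + fromBlocks (eepᵀ * Hep * dep) 0 0 (eemᵀ * Hem * dem)
        + fromBlocks 0 0 0 (esmᵀ * Hsm * dsm))))
    (hSATIC : SATIC = -(Hbar⁻¹ *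
      fromBlocks (espᵀ * Hsp * dsp) (espᵀ * Hsp * dnm) 0 0))
    (hSATBC2 : SATBC2 = -(Hbar⁻¹ *
      (fromBlocks (ewpᵀ * Hwp * ewp) 0 0 (ewmᵀ * Hwm * ewm)
        + fromBlocks (eepᵀ * Hep * eep) 0 0 (eemᵀ * Hem * eem))))
    (D E : Matrix (Fin Np ⊕ Fin Nm) (Fin Np ⊕ Fin Nm) ℝ)
    (hD : D = (c ^ 2) • (P * (fromBlocks DLp 0 0 DLm + SATBC1 + SATIC) * P))
    (hE : E = c • (P * SATBC2 * P))
    (hRpPSD : Rp.PosSemidef) (hRmPSD : Rm.PosSemidef) :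
    (∀ u v : Fin Np ⊕ Fin Nm → ℝ,
      u ⬝ᵥ (Hbar * D) *ᵥ v =
        -(c ^ 2) *
          (((Dxp *ᵥ ((P *ᵥ u) ∘ Sum.inl)) ⬝ᵥ Hp *ᵥ (Dxp *ᵥ ((P *ᵥ v) ∘ Sum.inl))
            + (Dyp *ᵥ ((P *ᵥ u) ∘ Sum.inl)) ⬝ᵥ Hp *ᵥ (Dyp *ᵥ ((P *ᵥ v) ∘ Sum.inl))
            + ((P *ᵥ u) ∘ Sum.inl) ⬝ᵥ Rp *ᵥ ((P *ᵥ v) ∘ Sum.inl))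
          + ((Dxm *ᵥ ((P *ᵥ u) ∘ Sum.inr)) ⬝ᵥ Hm *ᵥ (Dxm *ᵥ ((P *ᵥ v) ∘ Sum.inr))
            + (Dym *ᵥ ((P *ᵥ u) ∘ Sum.inr)) ⬝ᵥ Hm *ᵥ (Dym *ᵥ ((P *ᵥ v) ∘ Sum.inr))
            + ((P *ᵥ u) ∘ Sum.inr) ⬝ᵥ Rm *ᵥ ((P *ᵥ v) ∘ Sum.inr)))) ∧
    (∀ u : Fin Np ⊕ Fin Nm → ℝ, u ⬝ᵥ Hbar *ᵥ (D *ᵥ u) ≤ 0) := by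

  -- basic invertibility facts
  have hHdet : IsUnit Hbar.det := by
    rw [hHbar, Matrix.det_fromBlocks_zero₂₁]
    exact (mul_pos hHp.det_pos hHm.det_pos).ne'.isUnit
  have hHsymm : Hbarᵀ = Hbar := by
    rw [hHbar, fromBlocks_transpose, transpose_zero, show Hpᵀ = Hp from hHp.1, show Hmᵀ = Hm from hHm.1]
    simp
  have hHinvsymm : (Hbar⁻¹)ᵀ = Hbar⁻¹ := by
    rw [Matrix.transpose_nonsing_inv, hHsymm]
  have hMsymm : (L * Hbar⁻¹ * Lᵀ)ᵀ = L * Hbar⁻¹ * Lᵀ := by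
    simp [Matrix.transpose_mul, hHinvsymm, Matrix.mul_assoc]
  have hMinvsymm : ((L * Hbar⁻¹ * Lᵀ)⁻¹)ᵀ = (L * Hbar⁻¹ * Lᵀ)⁻¹ := by
    rw [Matrix.transpose_nonsing_inv, hMsymm]
  have hMinvsymm2 : ((L * (Hbar⁻¹ * Lᵀ))⁻¹)ᵀ = (L * (Hbar⁻¹ * Lᵀ))⁻¹ := by
    rw [← Matrix.mul_assoc]; exact hMinvsymm
  have hMdet : IsUnit (L * Hbar⁻¹ * Lᵀ).det := (Matrix.isUnit_iff_isUnit_det _).mp hLHL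
  have hLP : L * P = 0 := by
    rw [hP, Matrix.mul_sub, Matrix.mul_one]
    have : L * (Hbar⁻¹ * Lᵀ * (L * Hbar⁻¹ * Lᵀ)⁻¹ * L)
        = (L * Hbar⁻¹ * Lᵀ) * ((L * Hbar⁻¹ * Lᵀ)⁻¹ * L) := by
      simp only [Matrix.mul_assoc]
    rw [this, Matrix.mul_nonsing_inv_cancel_left _ _ hMdet, sub_self]
  have hHP : Hbar * P = Hbar - Lᵀ * (L * Hbar⁻¹ * Lᵀ)⁻¹ * L := by
    rw [hP, Matrix.mul_sub, Matrix.mul_one]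
    congr 1
    have : Hbar⁻¹ * Lᵀ * (L * Hbar⁻¹ * Lᵀ)⁻¹ * L
        = Hbar⁻¹ * (Lᵀ * (L * Hbar⁻¹ * Lᵀ)⁻¹ * L) := by simp only [Matrix.mul_assoc]
    rw [this, Matrix.mul_nonsing_inv_cancel_left _ _ hHdet]
  have hPH : Pᵀ * Hbar = Hbar - Lᵀ * (L * Hbar⁻¹ * Lᵀ)⁻¹ * L := by
    rw [hP, Matrix.transpose_sub, Matrix.transpose_one, Matrix.sub_mul, Matrix.one_mul]
    congr 1
    have ht : (Hbar⁻¹ * Lᵀ * (L * Hbar⁻¹ * Lᵀ)⁻¹ * L)ᵀ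
        = Lᵀ * (L * Hbar⁻¹ * Lᵀ)⁻¹ * L * Hbar⁻¹ := by
      simp only [Matrix.transpose_mul, Matrix.transpose_transpose, hHinvsymm, hMinvsymm2,
        Matrix.mul_assoc]
    rw [ht, Matrix.nonsing_inv_mul_cancel_right _ _ hHdet]
  have hcomm : Pᵀ * Hbar = Hbar * P := by rw [hPH, hHP]
  -- L annihilates P-projected vectors
  have hwconstr : ∀ u : Fin Np ⊕ Fin Nm → ℝ,
      (enp *ᵥ ((P *ᵥ u) ∘ Sum.inl) = 0) ∧
      (esp *ᵥ ((P *ᵥ u) ∘ Sum.inl) = enm *ᵥ ((P *ᵥ u) ∘ Sum.inr)) := by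
    intro u
    have h0 : (fromBlocks enp 0 esp (-enm)) *ᵥ (P *ᵥ u) = 0 := by
      rw [← hL, Matrix.mulVec_mulVec, hLP, Matrix.zero_mulVec]
    rw [fromBlocks_mulVec] at h0
    constructor
    · funext i
      have := congrFun h0 (Sum.inl i)
      simpa using this
    · funext i
      have := congrFun h0 (Sum.inr i)
      simp only [Sum.elim_inr, Matrix.neg_mulVec, Pi.add_apply, Pi.neg_apply,
        Pi.zero_apply] at this
      linarith
  -- the key quadratic-form identity
  have key : ∀ u v : Fin Np ⊕ Fin Nm → ℝ,
      u ⬝ᵥ (Hbar * D) *ᵥ v =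
        -(c ^ 2) *
          (((Dxp *ᵥ ((P *ᵥ u) ∘ Sum.inl)) ⬝ᵥ Hp *ᵥ (Dxp *ᵥ ((P *ᵥ v) ∘ Sum.inl))
            + (Dyp *ᵥ ((P *ᵥ u) ∘ Sum.inl)) ⬝ᵥ Hp *ᵥ (Dyp *ᵥ ((P *ᵥ v) ∘ Sum.inl))
            + ((P *ᵥ u) ∘ Sum.inl) ⬝ᵥ Rp *ᵥ ((P *ᵥ v) ∘ Sum.inl))
          + ((Dxm *ᵥ ((P *ᵥ u) ∘ Sum.inr)) ⬝ᵥ Hm *ᵥ (Dxm *ᵥ ((P *ᵥ v) ∘ Sum.inr))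
            + (Dym *ᵥ ((P *ᵥ u) ∘ Sum.inr)) ⬝ᵥ Hm *ᵥ (Dym *ᵥ ((P *ᵥ v) ∘ Sum.inr))
            + ((P *ᵥ u) ∘ Sum.inr) ⬝ᵥ Rm *ᵥ ((P *ᵥ v) ∘ Sum.inr))) := by
    intro u v
    set X : Matrix (Fin Np ⊕ Fin Nm) (Fin Np ⊕ Fin Nm) ℝ :=
      fromBlocks DLp 0 0 DLm + SATBC1 + SATIC with hX
    set B1 : Matrix (Fin Np ⊕ Fin Nm) (Fin Np ⊕ Fin Nm) ℝ :=
      fromBlocks (Hp * DLp) 0 0 (Hm * DLm) with hB1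
    set B2 : Matrix (Fin Np ⊕ Fin Nm) (Fin Np ⊕ Fin Nm) ℝ :=
      fromBlocks (ewpᵀ * Hwp * dwp + eepᵀ * Hep * dep) 0 0
        (ewmᵀ * Hwm * dwm + eemᵀ * Hem * dem + esmᵀ * Hsm * dsm) with hB2
    set B3 : Matrix (Fin Np ⊕ Fin Nm) (Fin Np ⊕ Fin Nm) ℝ :=
      fromBlocks (espᵀ * Hsp * dsp) (espᵀ * Hsp * dnm) 0 0 with hB3
    have hHX : Hbar * X = B1 - B2 - B3 := by
      have e1 : Hbar * fromBlocks DLp 0 0 DLm = B1 := by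
        rw [hHbar, fromBlocks_multiply, hB1]
        simp
      have e2 : Hbar * SATBC1 = -B2 := by
        rw [hSATBC1, Matrix.mul_neg, Matrix.mul_nonsing_inv_cancel_left _ _ hHdet, hB2]
        simp [fromBlocks_add]
      have e3 : Hbar * SATIC = -B3 := by
        rw [hSATIC, Matrix.mul_neg, Matrix.mul_nonsing_inv_cancel_left _ _ hHdet, hB3]
      rw [hX, Matrix.mul_add, Matrix.mul_add, e1, e2, e3]
      abel
    have hred : u ⬝ᵥ (Hbar * D) *ᵥ v
        = c ^ 2 * ((P *ᵥ u) ⬝ᵥ (Hbar * X) *ᵥ (P *ᵥ v)) := by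
      have hmat : Hbar * D = c ^ 2 • (Pᵀ * (Hbar * X) * P) := by
        rw [hD, Matrix.mul_smul]
        congr 1
        calc Hbar * (P * X * P) = Pᵀ * Hbar * X * P := by
              simp only [← Matrix.mul_assoc, hcomm]
          _ = Pᵀ * (Hbar * X) * P := by simp only [Matrix.mul_assoc]
      rw [hmat, Matrix.smul_mulVec, dotProduct_smul, smul_eq_mul, bdryDot]
    set wp := (P *ᵥ u) ∘ Sum.inl with hwp
    set wm := (P *ᵥ u) ∘ Sum.inr with hwm
    set zp := (P *ᵥ v) ∘ Sum.inl with hzp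
    set zm := (P *ᵥ v) ∘ Sum.inr with hzm
    obtain ⟨hnp0, hintf⟩ := hwconstr u
    rw [hred, hHX, sub_mulVec, sub_mulVec, dotProduct_sub, dotProduct_sub,
      blockDot, blockDot, blockDot]
    simp only [Matrix.zero_mulVec, dotProduct_zero, add_zero, zero_add,
      Matrix.add_mulVec, dotProduct_add, ← hwp, ← hwm, ← hzp, ← hzm]
    rw [hSBPp wp zp, hSBPm wm zm, bdryDot, bdryDot, bdryDot, bdryDot, bdryDot, bdryDot,
      bdryDot]
    rw [hnp0, zero_dotProduct, hintf, hmatch]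
    ring
  refine ⟨key, ?_⟩
  intro u
  have h1 : u ⬝ᵥ Hbar *ᵥ (D *ᵥ u) = u ⬝ᵥ (Hbar * D) *ᵥ u := by
    rw [Matrix.mulVec_mulVec]
  rw [h1, key u u]
  have n1 : 0 ≤ (Dxp *ᵥ ((P *ᵥ u) ∘ Sum.inl)) ⬝ᵥ Hp *ᵥ (Dxp *ᵥ ((P *ᵥ u) ∘ Sum.inl)) := by
    simpa only [star_trivial] using hHp.posSemidef.dotProduct_mulVec_nonneg _
  have n2 : 0 ≤ (Dyp *ᵥ ((P *ᵥ u) ∘ Sum.inl)) ⬝ᵥ Hp *ᵥ (Dyp *ᵥ ((P *ᵥ u) ∘ Sum.inl)) := by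
    simpa only [star_trivial] using hHp.posSemidef.dotProduct_mulVec_nonneg _
  have n3 : 0 ≤ ((P *ᵥ u) ∘ Sum.inl) ⬝ᵥ Rp *ᵥ ((P *ᵥ u) ∘ Sum.inl) := by
    simpa only [star_trivial] using hRpPSD.dotProduct_mulVec_nonneg _
  have n4 : 0 ≤ (Dxm *ᵥ ((P *ᵥ u) ∘ Sum.inr)) ⬝ᵥ Hm *ᵥ (Dxm *ᵥ ((P *ᵥ u) ∘ Sum.inr)) := by
    simpa only [star_trivial] using hHm.posSemidef.dotProduct_mulVec_nonneg _
  have n5 : 0 ≤ (Dym *ᵥ ((P *ᵥ u) ∘ Sum.inr)) ⬝ᵥ Hm *ᵥ (Dym *ᵥ ((P *ᵥ u) ∘ Sum.inr)) := by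
    simpa only [star_trivial] using hHm.posSemidef.dotProduct_mulVec_nonneg _
  have n6 : 0 ≤ ((P *ᵥ u) ∘ Sum.inr) ⬝ᵥ Rm *ᵥ ((P *ᵥ u) ∘ Sum.inr) := by
    simpa only [star_trivial] using hRmPSD.dotProduct_mulVec_nonneg _
  nlinarith [sq_nonneg c]
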